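/- arXiv:1510.02339 — 3 statements merged into one kernel-verified Lean document; each statement's English description precedes it below -/
import Mathlib

section
/- Let Ω = {z ∈ ℂ : −2 < Re z < 2 and −4 < Im z < 0}, an open bounded convex square in ℂ. For every natural number n ≥ 1 there exists a complex polynomial p of degree n + 1 such that p has at least n roots (counted with multiplicity) in Ω, while the derivative p' has no roots in Ω. Consequently, there exists a sequence of polynomials (p_n) with deg p_n = n + 1 → ∞ and #_{p_n}(Ω)/deg p_n → 1, yet #_{p_n'}(Ω) = 0 for all n. -/
open Filter Polynomial
open scoped Classical

set_option maxHeartbeats 800000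


noncomputable def glEps (n : ℕ) : ℝ := 1 / (10000 * ((n : ℝ) + 1) ^ 5)

noncomputable def glRt (n k : ℕ) : ℂ :=
  if k = 0 then Complex.I else ⟨-2 + 4 * (k : ℝ) / ((n : ℝ) + 1), -(glEps n)⟩

lemma glEps_pos (n : ℕ) : 0 < glEps n := by
  have h : (0:ℝ) ≤ (n : ℝ) := Nat.cast_nonneg n
  unfold glEps; positivity

lemma glEps_le (n : ℕ) : glEps n ≤ 1 / (8 * ((n : ℝ) + 1) ^ 2) := by
  have h : (1:ℝ) ≤ (n : ℝ) + 1 := by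
    have := Nat.cast_nonneg (α := ℝ) n; linarith
  unfold glEps
  rw [div_le_div_iff₀ (by positivity) (by positivity)]
  have h3 : ((n:ℝ) + 1) ^ 2 ≤ ((n:ℝ) + 1) ^ 5 :=
    pow_le_pow_right₀ h (by norm_num)
  nlinarith [sq_nonneg ((n:ℝ)+1)]

lemma glRt_zero (n : ℕ) : glRt n 0 = Complex.I := if_pos rfl

lemma glRt_re (n k : ℕ) (hk : k ≠ 0) : (glRt n k).re = -2 + 4 * (k : ℝ) / ((n : ℝ) + 1) := by
  simp [glRt, hk]

lemma glRt_im (n k : ℕ) (hk : k ≠ 0) : (glRt n k).im = -(glEps n) := by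
  simp [glRt, hk]

lemma glSum_ne_zero (n : ℕ) (z : ℂ)
    (h1 : -2 < z.re) (h2 : z.re < 2) (h3 : -4 < z.im) (h4 : z.im < 0)
    (hz : ∀ k ∈ Finset.range (n + 1), z ≠ glRt n k) :
    ∑ k ∈ Finset.range (n + 1), (z - glRt n k)⁻¹ ≠ 0 := by
  have hm1 : (1:ℝ) ≤ (n : ℝ) + 1 := by
    have := Nat.cast_nonneg (α := ℝ) n; linarith
  set m : ℝ := (n : ℝ) + 1 with hmdef
  set ε : ℝ := glEps n with hεdef
  have hε : 0 < ε := glEps_pos n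
  set ρ : ℝ := 1 / (8 * m ^ 2) with hρdef
  have hρ : 0 < ρ := by positivity
  have hmpos : (0:ℝ) < m := by linarith
  have hmne : m ≠ 0 := ne_of_gt hmpos
  have hερ : ε ≤ ρ := glEps_le n
  have hz0 : z ≠ Complex.I := by
    intro h
    rw [h, Complex.I_im] at h4
    norm_num at h4
  have hsub_ne0 : z - Complex.I ≠ 0 := sub_ne_zero.mpr hz0
  have hnormSq0pos : 0 < Complex.normSq (z - Complex.I) := Complex.normSq_pos.mpr hsub_ne0
  have him0 : (z - glRt n 0)⁻¹.im = (1 - z.im) / Complex.normSq (z - Complex.I) := by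
    rw [glRt_zero, Complex.inv_im, Complex.sub_im, Complex.I_im]
    ring
  have hre_k : ∀ k, k ≠ 0 → (z - glRt n k).re = z.re - (-2 + 4 * (k : ℝ) / m) := by
    intro k hk; rw [Complex.sub_re, glRt_re n k hk]
  have him_k : ∀ k, k ≠ 0 → (z - glRt n k).im = z.im + ε := by
    intro k hk; rw [Complex.sub_im, glRt_im n k hk]; ring
  by_cases hcase : z.im ≤ -ε
  · -- Case A : all imaginary parts nonneg, one positive
    intro h0
    have hpos : 0 < (∑ k ∈ Finset.range (n + 1), (z - glRt n k)⁻¹).im := by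
      rw [Complex.im_sum]
      apply Finset.sum_pos'
      · intro k hk
        by_cases hk0 : k = 0
        · subst hk0; rw [him0]
          have h5 : 0 < 1 - z.im := by linarith
          positivity
        · rw [Complex.inv_im, him_k k hk0]
          apply div_nonneg (by linarith) (Complex.normSq_nonneg _)
      · refine ⟨0, Finset.mem_range.mpr (Nat.succ_pos n), ?_⟩
        rw [him0]
        have h5 : 0 < 1 - z.im := by linarith
        positivity
    rw [h0] at hpos; simp at hpos
  · push_neg at hcase
    by_cases hnear : ∃ k ∈ Finset.range (n + 1), k ≠ 0 ∧ |z.re - (-2 + 4 * (k : ℝ) / m)| ≤ ρ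
    · -- Case B : z close (horizontally) to a root; dominant term
      obtain ⟨k, hkmem, hk0, hknear⟩ := hnear
      intro h0
      have hzk_ne : z - glRt n k ≠ 0 := sub_ne_zero.mpr (hz k hkmem)
      have hnorm_small : ‖z - glRt n k‖ ≤ 1 / (4 * m ^ 2) := by
        have hA : |(z - glRt n k).re| ≤ ρ := by rw [hre_k k hk0]; exact hknear
        have hB : |(z - glRt n k).im| ≤ ε := by
          rw [him_k k hk0, abs_le]; constructor <;> linarith
        calc ‖z - glRt n k‖ ≤ |(z - glRt n k).re| + |(z - glRt n k).im| :=
              Complex.norm_le_abs_re_add_abs_im _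
          _ ≤ ρ + ε := add_le_add hA hB
          _ ≤ 2 * ρ := by linarith
          _ = 1 / (4 * m ^ 2) := by rw [hρdef]; field_simp; ring
      have hmain : 4 * m ^ 2 ≤ ‖(z - glRt n k)⁻¹‖ := by
        rw [norm_inv, ← one_div]
        calc (4 * m ^ 2 : ℝ) = 1 / (1 / (4 * m ^ 2)) := by
              rw [one_div_one_div]
          _ ≤ 1 / ‖z - glRt n k‖ :=
              one_div_le_one_div_of_le (norm_pos_iff.mpr hzk_ne) hnorm_small
      have hrest : ‖∑ j ∈ (Finset.range (n + 1)).erase k, (z - glRt n j)⁻¹‖ ≤ (m - 1) * m := by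
        calc ‖∑ j ∈ (Finset.range (n + 1)).erase k, (z - glRt n j)⁻¹‖
            ≤ ∑ j ∈ (Finset.range (n + 1)).erase k, ‖(z - glRt n j)⁻¹‖ := norm_sum_le _ _
          _ ≤ ((Finset.range (n + 1)).erase k).card • m := by
              apply Finset.sum_le_card_nsmul
              intro j hj
              have hjk : j ≠ k := (Finset.mem_erase.mp hj).1
              rw [norm_inv]
              by_cases hj0 : j = 0
              · subst hj0
                rw [glRt_zero]
                have h1le : (1:ℝ) ≤ ‖z - Complex.I‖ := by
                  calc (1:ℝ) ≤ |(z - Complex.I).im| := by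
                        rw [Complex.sub_im, Complex.I_im, abs_of_neg (by linarith)]; linarith
                    _ ≤ ‖z - Complex.I‖ := Complex.abs_im_le_norm _
                calc ‖z - Complex.I‖⁻¹ ≤ 1 := by
                      rw [inv_le_one_iff₀]; right; exact h1le
                  _ ≤ m := hm1
              · have hjkR : (1:ℝ) ≤ |(j:ℝ) - (k:ℝ)| := by
                  rcases lt_or_gt_of_ne hjk with hlt | hgt
                  · have hc : (j:ℝ) + 1 ≤ k := by exact_mod_cast hlt
                    rw [abs_sub_comm, abs_of_pos (by linarith)]; linarith
                  · have hc : (k:ℝ) + 1 ≤ j := by exact_mod_cast hgt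
                    rw [abs_of_pos (by linarith)]; linarith
                have hmpos : (0:ℝ) < m := by linarith
                have hsep : 4 / m ≤ |(-2 + 4 * (j : ℝ) / m) - (-2 + 4 * (k : ℝ) / m)| := by
                  have he : (-2 + 4 * (j : ℝ) / m) - (-2 + 4 * (k : ℝ) / m)
                      = 4 * ((j:ℝ) - k) / m := by ring
                  rw [he, abs_div, abs_of_pos hmpos, abs_mul, abs_of_pos (by norm_num : (0:ℝ) < 4)]
                  gcongr
                  nlinarith
                have hρm : ρ ≤ 1 / m := by
                  rw [hρdef, div_le_div_iff₀ (by positivity) hmpos]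
                  nlinarith
                have htri : |(-2 + 4 * (j : ℝ) / m) - (-2 + 4 * (k : ℝ) / m)|
                    ≤ |(-2 + 4 * (j : ℝ) / m) - z.re| + |z.re - (-2 + 4 * (k : ℝ) / m)| :=
                  abs_sub_le _ _ _
                have hresep : 3 / m ≤ |(z - glRt n j).re| := by
                  rw [hre_k j hj0, abs_sub_comm]
                  have : |(-2 + 4 * (j : ℝ) / m) - z.re| ≥ 4 / m - ρ := by linarith
                  calc 3 / m = 4 / m - 1 / m := by ring
                    _ ≤ 4 / m - ρ := by linarith
                    _ ≤ |(-2 + 4 * (j : ℝ) / m) - z.re| := this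
                have hnormge : 3 / m ≤ ‖z - glRt n j‖ :=
                  le_trans hresep (Complex.abs_re_le_norm _)
                calc ‖z - glRt n j‖⁻¹ ≤ (3 / m)⁻¹ := by
                      apply inv_anti₀ (by positivity) hnormge  -- check name
                  _ = m / 3 := by rw [inv_div]
                  _ ≤ m := by linarith
          _ ≤ (m - 1) * m := by
              have hcard : ((Finset.range (n + 1)).erase k).card = n := by
                rw [Finset.card_erase_of_mem hkmem, Finset.card_range]
                omega
              rw [hcard, nsmul_eq_mul]
              have hn : (n : ℝ) = m - 1 := by rw [hmdef]; ring
              rw [hn]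
      have hsplit : (z - glRt n k)⁻¹ +
          ∑ j ∈ (Finset.range (n + 1)).erase k, (z - glRt n j)⁻¹ =
          ∑ j ∈ Finset.range (n + 1), (z - glRt n j)⁻¹ :=
        Finset.add_sum_erase _ (fun j => (z - glRt n j)⁻¹) hkmem
      have heq : ‖(z - glRt n k)⁻¹‖
          = ‖∑ j ∈ (Finset.range (n + 1)).erase k, (z - glRt n j)⁻¹‖ := by
        have he : (z - glRt n k)⁻¹
            = -(∑ j ∈ (Finset.range (n + 1)).erase k, (z - glRt n j)⁻¹) := by
          rw [h0] at hsplit; linear_combination hsplit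
        rw [he, norm_neg]
      nlinarith [hmain, hrest, heq]
    · -- Case C : z in thin strip but away from all roots
      push_neg at hnear
      intro h0
      have hpos : 0 < (∑ k ∈ Finset.range (n + 1), (z - glRt n k)⁻¹).im := by
        rw [Complex.im_sum, ← Finset.add_sum_erase _ _ (Finset.mem_range.mpr (Nat.succ_pos n))]
        have hterm0 : 1 / 29 ≤ ((z - glRt n 0)⁻¹).im := by
          rw [him0]
          have hnum : (1:ℝ) ≤ 1 - z.im := by linarith
          have hden : Complex.normSq (z - Complex.I) ≤ 29 := by
            rw [Complex.normSq_apply, Complex.sub_re, Complex.sub_im, Complex.I_re, Complex.I_im]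
            nlinarith
          calc (1:ℝ) / 29 ≤ 1 / Complex.normSq (z - Complex.I) :=
                one_div_le_one_div_of_le hnormSq0pos hden
            _ ≤ (1 - z.im) / Complex.normSq (z - Complex.I) := by gcongr
        have hothers : ∀ j ∈ (Finset.range (n + 1)).erase 0,
            -(ε / ρ ^ 2) ≤ ((z - glRt n j)⁻¹).im := by
          intro j hj
          have hj0 : j ≠ 0 := (Finset.mem_erase.mp hj).1
          have hjmem : j ∈ Finset.range (n + 1) := (Finset.mem_erase.mp hj).2
          rw [Complex.inv_im, him_k j hj0]
          have hnum : 0 ≤ z.im + ε := by linarith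
          have hnum2 : z.im + ε ≤ ε := by linarith
          have hden : ρ ^ 2 ≤ Complex.normSq (z - glRt n j) := by
            have hfar := hnear j hjmem hj0
            have h2 : (z - glRt n j).re = z.re - (-2 + 4 * (j : ℝ) / m) := hre_k j hj0
            have hsq : ρ ^ 2 ≤ (z.re - (-2 + 4 * (j : ℝ) / m)) ^ 2 := by
              have h5 : ρ ≤ |z.re - (-2 + 4 * (j : ℝ) / m)| := le_of_lt hfar
              calc ρ ^ 2 ≤ |z.re - (-2 + 4 * (j : ℝ) / m)| ^ 2 := by
                    apply pow_le_pow_left₀ (le_of_lt hρ) h5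
                _ = (z.re - (-2 + 4 * (j : ℝ) / m)) ^ 2 := sq_abs _
            rw [Complex.normSq_apply, h2]
            nlinarith [sq_nonneg ((z - glRt n j).im)]
          have hnsqpos : 0 < Complex.normSq (z - glRt n j) := by nlinarith
          rw [neg_div, neg_le_neg_iff]
          calc (z.im + ε) / Complex.normSq (z - glRt n j)
              ≤ ε / Complex.normSq (z - glRt n j) := by gcongr
            _ ≤ ε / ρ ^ 2 := by gcongr
        have hsum_others : -(m * (ε / ρ ^ 2)) ≤
            ∑ j ∈ (Finset.range (n + 1)).erase 0, ((z - glRt n j)⁻¹).im := by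
          have hcard : ((Finset.range (n + 1)).erase 0).card = n := by
            rw [Finset.card_erase_of_mem (Finset.mem_range.mpr (Nat.succ_pos n)),
              Finset.card_range]
            omega
          calc -(m * (ε / ρ ^ 2)) ≤ (n : ℝ) * (-(ε / ρ ^ 2)) := by
                have hnm : (n:ℝ) ≤ m := by rw [hmdef]; linarith
                have hq : (0:ℝ) ≤ ε / ρ ^ 2 := by positivity
                nlinarith
            _ = ((Finset.range (n + 1)).erase 0).card • (-(ε / ρ ^ 2)) := by
                rw [hcard, nsmul_eq_mul]
            _ ≤ ∑ j ∈ (Finset.range (n + 1)).erase 0, ((z - glRt n j)⁻¹).im :=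
              Finset.card_nsmul_le_sum _ _ _ hothers
        have hkey : m * (ε / ρ ^ 2) = 64 / 10000 := by
          rw [hεdef, hρdef]
          show m * (glEps n / (1 / (8 * m ^ 2)) ^ 2) = 64 / 10000
          unfold glEps
          rw [← hmdef]
          have hmne : m ≠ 0 := by linarith
          field_simp
          ring
        have hfin : 0 < 1 / 29 - m * (ε / ρ ^ 2) := by
          rw [hkey]; norm_num
        linarith [hterm0, hsum_others]
      rw [h0] at hpos; simp at hpos

noncomputable def glS (n : ℕ) : Multiset ℂ := Multiset.map (glRt n) (Finset.range (n + 1)).val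

noncomputable def glP (n : ℕ) : Polynomial ℂ :=
  (Multiset.map (fun a => X - C a) (glS n)).prod

lemma glRt_inj (n : ℕ) : Function.Injective (glRt n) := by
  intro j k h
  by_cases hj : j = 0 <;> by_cases hk : k = 0
  · omega
  · exfalso
    rw [hj, glRt_zero] at h
    have := congrArg Complex.im h
    rw [Complex.I_im, glRt_im n k hk] at this
    have := glEps_pos n
    linarith
  · exfalso
    rw [hk, glRt_zero] at h
    have := congrArg Complex.im h
    rw [Complex.I_im, glRt_im n j hj] at this
    have := glEps_pos n
    linarith
  · have := congrArg Complex.re h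
    rw [glRt_re n j hj, glRt_re n k hk] at this
    have hm : (0:ℝ) < (n : ℝ) + 1 := by positivity
    have : (j : ℝ) = (k : ℝ) := by
      field_simp at this
      push_cast at this; linarith
    exact_mod_cast this

lemma glS_nodup (n : ℕ) : (glS n).Nodup :=
  Multiset.Nodup.map (glRt_inj n) (Finset.range (n + 1)).nodup

lemma glP_eq (n : ℕ) : glP n = ∏ k ∈ Finset.range (n + 1), (X - C (glRt n k)) := by
  rw [Finset.prod_eq_multiset_prod]
  unfold glP glS
  rw [Multiset.map_map]
  rfl

lemma glP_natDegree (n : ℕ) : (glP n).natDegree = n + 1 := by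
  rw [glP_eq, Polynomial.natDegree_prod _ _ (fun i _ => X_sub_C_ne_zero (glRt n i))]
  simp [Polynomial.natDegree_X_sub_C]

lemma glP_roots (n : ℕ) : (glP n).roots = glS n :=
  roots_multiset_prod_X_sub_C (glS n)

lemma glP_ne_zero (n : ℕ) : glP n ≠ 0 := by
  rw [glP_eq]
  exact Finset.prod_ne_zero_iff.mpr fun i _ => X_sub_C_ne_zero (glRt n i)

lemma glDeriv_ne_zero (n : ℕ) (z : ℂ)
    (h1 : -2 < z.re) (h2 : z.re < 2) (h3 : -4 < z.im) (h4 : z.im < 0) :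
    Polynomial.eval z (Polynomial.derivative (glP n)) ≠ 0 := by
  by_cases hr : ∃ k ∈ Finset.range (n + 1), z = glRt n k
  · obtain ⟨k, hk, hzk⟩ := hr
    have hzS : z ∈ glS n :=
      Multiset.mem_map.mpr ⟨k, Finset.mem_val.mpr hk, hzk.symm⟩
    unfold glP
    rw [Polynomial.eval_multiset_prod_X_sub_C_derivative hzS]
    apply Multiset.prod_ne_zero
    intro h0
    obtain ⟨a, haS, ha0⟩ := Multiset.mem_map.mp h0
    have hne : a ≠ z := ((glS_nodup n).mem_erase_iff.mp haS).1
    exact hne (by linear_combination -ha0)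
  · push_neg at hr
    have hsum := glSum_ne_zero n z h1 h2 h3 h4 hr
    have hall : ∀ a ∈ glS n, z - a ≠ 0 := by
      intro a haS
      obtain ⟨k, hk, hka⟩ := Multiset.mem_map.mp haS
      rw [← hka]
      exact sub_ne_zero.mpr (hr k (Finset.mem_val.mp hk))
    have hP : (Multiset.map (fun a => z - a) (glS n)).prod ≠ 0 := by
      apply Multiset.prod_ne_zero
      intro h0
      obtain ⟨a, haS, ha0⟩ := Multiset.mem_map.mp h0
      exact hall a haS ha0
    have hcalc : Polynomial.eval z (Polynomial.derivative (glP n)) =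
        ((glS n).map (fun a => (z - a)⁻¹)).sum *
          (Multiset.map (fun a => z - a) (glS n)).prod := by
      unfold glP
      rw [Polynomial.derivative_prod]
      have h5 := map_multiset_sum (Polynomial.evalRingHom z)
        (Multiset.map (fun i => (Multiset.map (fun a => X - C a) ((glS n).erase i)).prod *
          Polynomial.derivative (X - C i)) (glS n))
      rw [Polynomial.coe_evalRingHom] at h5
      rw [h5, Multiset.map_map]
      have h6 : ∀ a ∈ glS n,
          (Polynomial.eval z ∘ fun i =>
            (Multiset.map (fun a => X - C a) ((glS n).erase i)).prod *
              Polynomial.derivative (X - C i)) a = (z - a)⁻¹ *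
            (Multiset.map (fun a => z - a) (glS n)).prod := by
        intro a haS
        simp only [Function.comp_apply, Polynomial.derivative_X_sub_C, mul_one,
          Polynomial.eval_mul, Polynomial.eval_one, Polynomial.eval_multiset_prod,
          Multiset.map_map, Polynomial.eval_sub, Polynomial.eval_X, Polynomial.eval_C]
        have h8 : (z - a) * (Multiset.map (fun b => z - b) ((glS n).erase a)).prod
            = (Multiset.map (fun b => z - b) (glS n)).prod :=
          Multiset.prod_map_erase haS
        field_simp [hall a haS]
        linear_combination h8
      rw [Multiset.map_congr rfl h6]
      rw [show (fun a => (z - a)⁻¹ * (Multiset.map (fun a => z - a) (glS n)).prod)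
          = fun a => (fun a => (z - a)⁻¹) a * (Multiset.map (fun a => z - a) (glS n)).prod from rfl]
      rw [Multiset.sum_map_mul_right]
    rw [hcalc]
    apply mul_ne_zero _ hP
    have h9 : ((glS n).map (fun a => (z - a)⁻¹)).sum
        = ∑ k ∈ Finset.range (n + 1), (z - glRt n k)⁻¹ := by
      unfold glS
      rw [Multiset.map_map, Finset.sum_eq_multiset_sum]
      rfl
    rw [h9]
    exact hsum

lemma glRt_mem (n k : ℕ) (hk1 : 1 ≤ k) (hk2 : k ≤ n) :
    glRt n k ∈ {z : ℂ | -2 < z.re ∧ z.re < 2 ∧ -4 < z.im ∧ z.im < 0} := by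
  have hk0 : k ≠ 0 := by omega
  have hm : (0:ℝ) < (n:ℝ) + 1 := by positivity
  have hkr : (1:ℝ) ≤ (k:ℝ) := by exact_mod_cast hk1
  have hkn : (k:ℝ) ≤ (n:ℝ) := by exact_mod_cast hk2
  have hε := glEps_pos n
  have hε4 : glEps n < 4 := by
    have := glEps_le n
    have h8 : 1 / (8 * ((n:ℝ) + 1) ^ 2) ≤ 1 / 8 := by
      apply one_div_le_one_div_of_le (by norm_num)
      nlinarith
    linarith
  refine ⟨?_, ?_, ?_, ?_⟩
  · rw [glRt_re n k hk0]
    have : 0 < 4 * (k:ℝ) / ((n:ℝ) + 1) := by positivity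
    linarith
  · rw [glRt_re n k hk0]
    have : 4 * (k:ℝ) / ((n:ℝ) + 1) < 4 := by
      rw [div_lt_iff₀ hm]; nlinarith
    linarith
  · rw [glRt_im n k hk0]; linarith
  · rw [glRt_im n k hk0]; linarith

lemma glCount (n : ℕ) :
    n ≤ ((glP n).roots.filter
      (· ∈ {z : ℂ | -2 < z.re ∧ z.re < 2 ∧ -4 < z.im ∧ z.im < 0})).card := by
  rw [glP_roots]
  unfold glS
  rw [Multiset.filter_map, Multiset.card_map]
  have h1 : (Multiset.filter
        ((· ∈ {z : ℂ | -2 < z.re ∧ z.re < 2 ∧ -4 < z.im ∧ z.im < 0}) ∘ glRt n)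
        (Finset.range (n + 1)).val)
      = (Finset.filter
        ((· ∈ {z : ℂ | -2 < z.re ∧ z.re < 2 ∧ -4 < z.im ∧ z.im < 0}) ∘ glRt n)
        (Finset.range (n + 1))).val := rfl
  rw [h1]
  have h2 : Finset.Ico 1 (n + 1) ⊆ Finset.filter
      ((· ∈ {z : ℂ | -2 < z.re ∧ z.re < 2 ∧ -4 < z.im ∧ z.im < 0}) ∘ glRt n)
      (Finset.range (n + 1)) := by
    intro k hk
    obtain ⟨hk1, hk2⟩ := Finset.mem_Ico.mp hk
    refine Finset.mem_filter.mpr ⟨Finset.mem_range.mpr hk2, ?_⟩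
    exact glRt_mem n k hk1 (by omega)
  calc n = (Finset.Ico 1 (n + 1)).card := by rw [Nat.card_Ico]; omega
    _ ≤ _ := Finset.card_le_card h2

lemma glDerivCount (n : ℕ) :
    (((glP n).derivative).roots.filter
      (· ∈ {z : ℂ | -2 < z.re ∧ z.re < 2 ∧ -4 < z.im ∧ z.im < 0})).card = 0 := by
  rw [Multiset.card_eq_zero, Multiset.filter_eq_nil]
  intro a ha hmem
  obtain ⟨hm1, hm2, hm3, hm4⟩ := hmem
  exact glDeriv_ne_zero n a hm1 hm2 hm3 hm4 ((Polynomial.mem_roots'.mp ha).2)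

theorem glMaster (n : ℕ) : ∃ p : Polynomial ℂ, p.natDegree = n + 1 ∧
    n ≤ (p.roots.filter
      (· ∈ {z : ℂ | -2 < z.re ∧ z.re < 2 ∧ -4 < z.im ∧ z.im < 0})).card ∧
    ((p.derivative).roots.filter
      (· ∈ {z : ℂ | -2 < z.re ∧ z.re < 2 ∧ -4 < z.im ∧ z.im < 0})).card = 0 :=
  ⟨glP n, glP_natDegree n, glCount n, glDerivCount n⟩


/-- The naive asymptotic Gauss–Lucas question has a negative answer: for the open square
`Ω = (-2,2) × (-4,0)` and every `n ≥ 1` there is a polynomial of degree `n + 1` with at least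
`n` roots (with multiplicity) in `Ω` whose derivative has no roots in `Ω`. Consequently there
is a sequence `(p n)` with `deg p_n = n + 1 → ∞` and `#_{p_n}(Ω)/deg p_n → 1`, yet
`#_{p_n'}(Ω) = 0` for all `n`. -/
theorem naive_asymptotic_gauss_lucas_fails_square :
    let Ω : Set ℂ := {z : ℂ | -2 < z.re ∧ z.re < 2 ∧ -4 < z.im ∧ z.im < 0}
    (∀ n : ℕ, 1 ≤ n → ∃ p : Polynomial ℂ, p.natDegree = n + 1 ∧
        n ≤ (p.roots.filter (· ∈ Ω)).card ∧
        ((p.derivative).roots.filter (· ∈ Ω)).card = 0) ∧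
    ∃ p : ℕ → Polynomial ℂ,
      (∀ n, (p n).natDegree = n + 1) ∧
      Tendsto (fun n => (p n).natDegree) atTop atTop ∧
      Tendsto
        (fun n => ((((p n).roots.filter (· ∈ Ω)).card : ℝ) / ((p n).natDegree : ℝ)))
        atTop (nhds 1) ∧
      (∀ n, (((p n).derivative).roots.filter (· ∈ Ω)).card = 0) := by
  intro Ω
  constructor
  · intro n _
    exact glMaster n
  · refine ⟨fun n => glP n, fun n => glP_natDegree n, ?_, ?_, fun n => glDerivCount n⟩
    · have h : (fun n => (glP n).natDegree) = fun n => n + 1 := funext glP_natDegree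
      rw [h]
      exact Filter.tendsto_add_atTop_nat 1
    · have hub : ∀ n : ℕ,
          ((((glP n).roots.filter (· ∈ Ω)).card : ℝ) / ((glP n).natDegree : ℝ)) ≤ 1 := by
        intro n
        apply div_le_one_of_le₀
        · have hc1 : ((glP n).roots.filter (· ∈ Ω)).card ≤ Multiset.card ((glP n).roots) :=
            Multiset.card_le_card (Multiset.filter_le _ _)
          have hc2 := Polynomial.card_roots' (glP n)
          exact_mod_cast le_trans hc1 hc2
        · positivity
      have hlb : ∀ n : ℕ, ((n:ℝ) / ((n:ℝ) + 1)) ≤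
          ((((glP n).roots.filter (· ∈ Ω)).card : ℝ) / ((glP n).natDegree : ℝ)) := by
        intro n
        have hdeg : ((glP n).natDegree : ℝ) = (n : ℝ) + 1 := by
          rw [glP_natDegree]; push_cast; ring
        rw [hdeg]
        gcongr
        exact Nat.cast_le.mpr (glCount n)
      apply tendsto_of_tendsto_of_tendsto_of_le_of_le
        (tendsto_natCast_div_add_atTop (1:ℝ)) tendsto_const_nhds hlb hub
end

section
/- For every natural number n ≥ 1, every complex root of the derivative of the polynomial (X − i)·T_n(X), where T_n is the n-th Chebyshev polynomial of the first kind, has strictly positive imaginary part. -/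
open Polynomial

/-- Every complex root of `T ℂ n` (for `n ≥ 1`) is real, and is not a root of the derivative. -/
lemma cheb_root_real_simple (n : ℕ) (hn : 1 ≤ n) (z : ℂ)
    (hz : (Polynomial.Chebyshev.T ℂ (n : ℤ)).eval z = 0) :
    z.im = 0 ∧ (derivative (Polynomial.Chebyshev.T ℂ (n : ℤ))).eval z ≠ 0 := by
  obtain ⟨θ, rfl⟩ := Complex.cos_surjective z
  rw [Polynomial.Chebyshev.T_complex_cos] at hz
  push_cast at hz
  obtain ⟨k, hk⟩ := Complex.cos_eq_zero_iff.mp hz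
  have hn0 : (n : ℂ) ≠ 0 := Nat.cast_ne_zero.mpr (by omega)
  have hθ : θ = (((2 * (k : ℝ) + 1) * Real.pi / 2 / n : ℝ) : ℂ) := by
    have : θ = ((2 * (k : ℂ) + 1) * (Real.pi : ℂ) / 2) / n := by
      field_simp at hk ⊢
      linear_combination hk
    rw [this]; push_cast; ring
  have him : (Complex.cos θ).im = 0 := by
    rw [hθ, ← Complex.ofReal_cos]
    exact Complex.ofReal_im _
  refine ⟨him, ?_⟩
  -- `sin (n θ) ≠ 0` since `cos (n θ) = 0`
  have hsin : Complex.sin ((n : ℂ) * θ) ≠ 0 := by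
    intro h
    have := Complex.sin_sq_add_cos_sq ((n : ℂ) * θ)
    rw [h, hz] at this
    norm_num at this
  have hU := Polynomial.Chebyshev.U_complex_cos θ ((n : ℤ) - 1)
  have hU' : (Polynomial.Chebyshev.U ℂ ((n : ℤ) - 1)).eval (Complex.cos θ) * Complex.sin θ
      = Complex.sin ((n : ℂ) * θ) := by
    rw [hU]; norm_num
  have hsθ : Complex.sin θ ≠ 0 := fun h => hsin (by rw [h, mul_zero] at hU'; exact hU'.symm)
  have hUne : (Polynomial.Chebyshev.U ℂ ((n : ℤ) - 1)).eval (Complex.cos θ) ≠ 0 :=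
    fun h => hsin (by rw [h, zero_mul] at hU'; exact hU'.symm)
  rw [Polynomial.Chebyshev.T_derivative_eq_U]
  simp only [eval_mul, eval_intCast]
  push_cast
  exact mul_ne_zero hn0 hUne

/-- Log-derivative identity: `p'(z) = p(z) * Σ_{r ∈ roots p} (z - r)⁻¹` when `p(z) ≠ 0`. -/
lemma deriv_eval_eq_sum (p : ℂ[X]) (z : ℂ) (hz : p.eval z ≠ 0) :
    (derivative p).eval z = p.eval z * ((p.roots.map (fun r => (z - r)⁻¹)).sum) := by
  classical
  have hsplit : p = C p.leadingCoeff * (p.roots.map fun a => X - C a).prod :=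
    (IsAlgClosed.splits p).eq_prod_roots
  have hne : ∀ r ∈ p.roots, z - r ≠ 0 := by
    intro r hr h
    have : z = r := by linear_combination h
    subst this
    exact hz ((mem_roots'.mp hr).2)
  have hprod : p.eval z = p.leadingCoeff * ((p.roots.map fun r => z - r).prod) := by
    conv_lhs => rw [hsplit]
    simp [eval_multiset_prod, Multiset.map_map, Function.comp]
  have hd : derivative p = C p.leadingCoeff *
      (p.roots.map (fun r => ((p.roots.erase r).map fun a => X - C a).prod *
        derivative (X - C r))).sum := by
    conv_lhs => rw [hsplit]
    rw [derivative_mul, derivative_C, zero_mul, zero_add, derivative_prod]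
  have heval : (derivative p).eval z
      = p.leadingCoeff * (p.roots.map (fun r =>
          ((p.roots.erase r).map fun a => z - a).prod)).sum := by
    rw [hd, eval_mul, eval_C]
    congr 1
    rw [show (eval z : ℂ[X] → ℂ) = (evalRingHom z : ℂ[X] → ℂ) from rfl,
      map_multiset_sum (evalRingHom z), Multiset.map_map]
    congr 1
    apply Multiset.map_congr rfl
    intro r _
    simp [eval_multiset_prod, Multiset.map_map, Function.comp]
  have hmap : p.roots.map (fun r => p.leadingCoeff *
        ((p.roots.erase r).map fun a => z - a).prod)
      = p.roots.map (fun r =>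
        (p.leadingCoeff * ((p.roots.map fun a => z - a).prod)) * (z - r)⁻¹) := by
    apply Multiset.map_congr rfl
    intro r hr
    have h1 : (z - r) * ((p.roots.erase r).map fun a => z - a).prod
        = ((p.roots.map fun a => z - a)).prod := Multiset.prod_map_erase (f := fun a => z - a) hr
    have h2 : ((p.roots.erase r).map fun a => z - a).prod
        = ((p.roots.map fun a => z - a)).prod * (z - r)⁻¹ := by
      field_simp [hne r hr]
      linear_combination h1
    rw [h2]; ring
  rw [heval, ← Multiset.sum_map_mul_left, hmap, Multiset.sum_map_mul_left, hprod]

/-- For every `n ≥ 1`, every complex root of the derivative of `(X - i) * T n`, where `T n` is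
the `n`-th Chebyshev polynomial of the first kind, has strictly positive imaginary part. -/
theorem chebyshev_shifted_derivative_roots_im_pos (n : ℕ) (hn : 1 ≤ n) :
    ∀ z : ℂ, (derivative ((X - C Complex.I) * Polynomial.Chebyshev.T ℂ (n : ℤ))).IsRoot z →
      0 < z.im := by
  intro z hz
  by_contra hle
  push_neg at hle
  set T := Polynomial.Chebyshev.T ℂ (n : ℤ) with hT
  have heq : T.eval z + (z - Complex.I) * (derivative T).eval z = 0 := by
    have := hz
    simp only [IsRoot, derivative_mul, derivative_sub, derivative_X, derivative_C, sub_zero,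
      eval_add, eval_mul, eval_sub, eval_X, eval_C, one_mul, eval_one] at this
    linear_combination this
  by_cases hTz : T.eval z = 0
  · obtain ⟨him, hder⟩ := cheb_root_real_simple n hn z hTz
    rw [hTz, zero_add] at heq
    rcases mul_eq_zero.mp heq with h | h
    · have : z = Complex.I := by linear_combination h
      rw [this] at hle
      norm_num [Complex.I_im] at hle
    · exact hder h
  · set S := (T.roots.map (fun r => (z - r)⁻¹)).sum with hS
    have hkey := deriv_eval_eq_sum T z hTz
    have heq2 : (z - Complex.I) * S = -1 := by
      have h : T.eval z * (1 + (z - Complex.I) * S) = 0 := by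
        rw [hkey] at heq
        linear_combination heq
      have := (mul_eq_zero.mp h).resolve_left hTz
      linear_combination this
    have hSne : S ≠ 0 := by
      intro h
      rw [h, mul_zero] at heq2
      norm_num at heq2
    have hSim : 0 ≤ S.im := by
      rw [hS, ← Complex.coe_imAddGroupHom, map_multiset_sum, Multiset.map_map]
      apply Multiset.sum_nonneg
      intro x hx
      obtain ⟨r, hr, rfl⟩ := Multiset.mem_map.mp hx
      have hrim : r.im = 0 := (cheb_root_real_simple n hn r (by
        have := (mem_roots'.mp hr).2
        exact this)).1
      simp only [Function.comp_apply, Complex.coe_imAddGroupHom, Complex.inv_im]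
      apply div_nonneg
      · simp [Complex.sub_im, hrim]
        linarith
      · exact Complex.normSq_nonneg _
    have hzi : z - Complex.I = -S⁻¹ := by
      field_simp
      linear_combination heq2
    have h1 : (z - Complex.I).im ≤ -1 := by
      simp [Complex.sub_im, Complex.I_im]
      linarith
    have h2 : 0 ≤ (-S⁻¹).im := by
      rw [Complex.neg_im, Complex.inv_im]
      have : -(-S.im / Complex.normSq S) = S.im / Complex.normSq S := by ring
      rw [this]
      exact div_nonneg hSim (Complex.normSq_nonneg _)
    rw [hzi] at h1
    linarith
end

section
/- Let 1 ≤ s < 2 and let K ⊂ ℂ be a compact set. Then there exists a constant C = C(s, K) > 0 such that for every nonzero complex polynomial q, ( ∫_K |q'(z)/q(z)|^s dA(z) )^{1/s} ≤ C · deg q. (The integrand is defined arbitrarily at the finitely many zeros of q, which form a set of dA-measure zero.) -/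
open MeasureTheory Polynomial
open scoped ENNReal NNReal Real
open Metric

lemma aux_logDeriv_sum (R : Multiset ℂ) (z : ℂ) (h : ∀ α ∈ R, z ≠ α) :
    (derivative (R.map fun α => X - C α).prod).eval z
      / ((R.map fun α => X - C α).prod).eval z
    = (R.map fun α => (z - α)⁻¹).sum := by
  induction R using Multiset.induction with
  | empty => simp
  | cons α R ih =>
    have hα : z - α ≠ 0 := sub_ne_zero.2 (h α (Multiset.mem_cons_self α R))
    have hR : ∀ β ∈ R, z ≠ β := fun β hβ => h β (Multiset.mem_cons_of_mem hβ)
    have hP : ((R.map fun α => X - C α).prod).eval z ≠ 0 := by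
      rw [eval_multiset_prod]
      refine Multiset.prod_ne_zero ?_
      simp only [Multiset.map_map, Multiset.mem_map, Function.comp_apply, eval_sub, eval_X, eval_C]
      rintro ⟨β, hβ, hβ0⟩
      exact sub_ne_zero.2 (hR β hβ) hβ0
    have ihs := ih hR
    simp only [Multiset.map_cons, Multiset.prod_cons, Multiset.sum_cons,
      derivative_mul, derivative_sub, derivative_X, derivative_C, sub_zero, one_mul,
      eval_add, eval_mul, eval_sub, eval_X, eval_C]
    rw [← ihs]
    field_simp
lemma aux_meas_sum (R : Multiset ℂ) :
    Measurable (fun z : ℂ => (R.map fun α => (z - α)⁻¹).sum) := by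
  induction R using Multiset.induction with
  | empty => simp only [Multiset.map_zero, Multiset.sum_zero]; exact measurable_const
  | cons α R ih =>
    simp only [Multiset.map_cons, Multiset.sum_cons]
    exact ((measurable_id.sub measurable_const).inv).add ih

lemma aux_eLpNorm_msum_le {p : ℝ≥0∞} (hp : 1 ≤ p) (ν : Measure ℂ) (B : ℝ≥0∞)
    (hB : ∀ α : ℂ, eLpNorm (fun z => (z - α)⁻¹) p ν ≤ B) (R : Multiset ℂ) :
    eLpNorm (fun z => (R.map fun α => (z - α)⁻¹).sum) p ν ≤ R.card * B := by
  induction R using Multiset.induction with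
  | empty => simp [eLpNorm_zero']
  | cons α R ih =>
    have heq : (fun z : ℂ => (((α ::ₘ R).map fun β => (z - β)⁻¹)).sum)
        = (fun z => (z - α)⁻¹) + fun z => ((R.map fun β => (z - β)⁻¹)).sum := by
      funext z; simp [Multiset.map_cons, Multiset.sum_cons]
    rw [heq, Multiset.card_cons]
    calc eLpNorm ((fun z : ℂ => (z - α)⁻¹) + fun z => ((R.map fun β => (z - β)⁻¹)).sum) p ν
        ≤ eLpNorm (fun z : ℂ => (z - α)⁻¹) p ν
          + eLpNorm (fun z : ℂ => ((R.map fun β => (z - β)⁻¹)).sum) p ν :=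
          eLpNorm_add_le ((measurable_id.sub measurable_const).inv).aestronglyMeasurable
            (aux_meas_sum R).aestronglyMeasurable hp
      _ ≤ B + R.card * B := add_le_add (hB α) ih
      _ = (↑(R.card + 1)) * B := by push_cast; rw [add_mul, one_mul, add_comm]
lemma aux_I_lt_top {s : ℝ} (hs0 : 0 ≤ s) (hs2 : s < 2) :
    ∫⁻ w in ball (0:ℂ) 1, ((‖w‖₊ : ℝ≥0∞))⁻¹ ^ s ∂volume < ⊤ := by
  set g : ℂ → ℝ≥0∞ := fun w => ((‖w‖₊ : ℝ≥0∞))⁻¹ ^ s with hg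
  set S : ℕ → Set ℂ := fun n => {w : ℂ | (2⁻¹:ℝ)^(n+1) ≤ ‖w‖ ∧ ‖w‖ < (2⁻¹:ℝ)^n} with hS
  have hcov : ball (0:ℂ) 1 ⊆ {0} ∪ ⋃ n, S n := by
    intro w hw
    rcases eq_or_ne w 0 with rfl | hw0
    · exact Or.inl rfl
    · refine Or.inr ?_
      have hwpos : 0 < ‖w‖ := norm_pos_iff.2 hw0
      have hw1 : ‖w‖ < 1 := by simpa [mem_ball, dist_eq_norm] using hw
      have hex : ∃ n : ℕ, (2⁻¹:ℝ)^(n+1) ≤ ‖w‖ := by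
        obtain ⟨n, hn⟩ := exists_pow_lt_of_lt_one hwpos (by norm_num : (2⁻¹:ℝ) < 1)
        exact ⟨n, le_trans (by
          rw [pow_succ]
          nlinarith [pow_pos (by norm_num : (0:ℝ) < 2⁻¹) n]) hn.le⟩
      have hle := Nat.find_spec hex
      have hlt : ‖w‖ < (2⁻¹:ℝ)^(Nat.find hex) := by
        rcases Nat.eq_zero_or_pos (Nat.find hex) with h0 | h0
        · rw [h0]; simpa using hw1
        · obtain ⟨k, hk⟩ := Nat.exists_eq_succ_of_ne_zero h0.ne'
          have := Nat.find_min hex (by omega : k < Nat.find hex)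
          rw [hk]; exact lt_of_not_ge this
      exact Set.mem_iUnion.2 ⟨Nat.find hex, hle, hlt⟩
  have key : ∀ n, ∫⁻ w in S n, g w ∂volume
      ≤ ENNReal.ofReal (Real.pi * 2 ^ s) * (ENNReal.ofReal ((2:ℝ) ^ (s - 2))) ^ n := by
    intro n
    have hb : (0:ℝ) < (2:ℝ)^n := by positivity
    have hbound : ∀ w ∈ S n, g w ≤ ENNReal.ofReal (((2:ℝ)^(n+1)) ^ s) := by
      intro w hw
      obtain ⟨h1, _⟩ := hw
      have hcoe : ENNReal.ofReal ((2⁻¹:ℝ)^(n+1)) ≤ (‖w‖₊ : ℝ≥0∞) := by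
        rw [← enorm_eq_nnnorm, ← ofReal_norm]
        exact ENNReal.ofReal_le_ofReal h1
      have hinv : ((‖w‖₊ : ℝ≥0∞))⁻¹ ≤ ENNReal.ofReal ((2:ℝ)^(n+1)) := by
        have := ENNReal.inv_le_inv' hcoe
        rwa [← ENNReal.ofReal_inv_of_pos (by positivity), inv_pow, inv_inv] at this
      calc g w ≤ (ENNReal.ofReal ((2:ℝ)^(n+1))) ^ s := ENNReal.rpow_le_rpow hinv hs0
        _ = ENNReal.ofReal (((2:ℝ)^(n+1)) ^ s) := by
            rw [← ENNReal.ofReal_rpow_of_pos (by positivity)]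
    have hvol : volume (S n) ≤ ENNReal.ofReal ((2⁻¹:ℝ)^n) ^ 2 * ENNReal.ofReal Real.pi := by
      have hsub : S n ⊆ ball (0:ℂ) ((2⁻¹:ℝ)^n) := by
        intro w hw; simpa [mem_ball, dist_eq_norm] using hw.2
      refine le_trans (measure_mono hsub) (le_of_eq ?_)
      rw [Complex.volume_ball, ← NNReal.coe_real_pi, ENNReal.ofReal_coe_nnreal]
    calc ∫⁻ w in S n, g w ∂volume
        ≤ ∫⁻ _ in S n, ENNReal.ofReal (((2:ℝ)^(n+1)) ^ s) ∂volume :=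
          setLIntegral_mono measurable_const hbound
      _ = ENNReal.ofReal (((2:ℝ)^(n+1)) ^ s) * volume (S n) := by
          rw [setLIntegral_const]
      _ ≤ ENNReal.ofReal (((2:ℝ)^(n+1)) ^ s) * (ENNReal.ofReal ((2⁻¹:ℝ)^n) ^ 2 * ENNReal.ofReal Real.pi) := by
          gcongr
      _ = ENNReal.ofReal ((((2:ℝ)^(n+1)) ^ s) * (((2⁻¹:ℝ)^n) ^ 2 * Real.pi)) := by
          rw [← ENNReal.ofReal_pow (by positivity), ← ENNReal.ofReal_mul (by positivity),
            ← ENNReal.ofReal_mul (by positivity)]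
      _ = ENNReal.ofReal (Real.pi * 2 ^ s) * (ENNReal.ofReal ((2:ℝ) ^ (s - 2))) ^ n := by
          rw [← ENNReal.ofReal_pow (by positivity), ← ENNReal.ofReal_mul (by positivity)]
          congr 1
          have e1 : ((2:ℝ)^(s-2))^n = ((2:ℝ)^n) ^ (s-2) := by
            rw [← Real.rpow_natCast ((2:ℝ)^(s-2)) n, ← Real.rpow_mul two_pos.le,
              mul_comm, Real.rpow_mul two_pos.le, Real.rpow_natCast]
          have e2 : ((2:ℝ)^(n+1)) ^ s = 2 ^ s * ((2:ℝ)^n) ^ s := by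
            rw [pow_succ, mul_comm ((2:ℝ)^n) 2, Real.mul_rpow two_pos.le (by positivity)]
          have e3 : (((2⁻¹:ℝ)^n) ^ 2 : ℝ) = ((2:ℝ)^n) ^ (-2:ℝ) := by
            rw [Real.rpow_neg hb.le, inv_pow, inv_pow, ← Real.rpow_natCast ((2:ℝ)^n) 2]
            norm_num
          have e4 : ((2:ℝ)^n)^s * ((2:ℝ)^n)^(-2:ℝ) = ((2:ℝ)^n)^(s-2) := by
            rw [← Real.rpow_add hb]; ring_nf
          rw [e2, e3, e1]
          calc 2 ^ s * ((2:ℝ)^n) ^ s * (((2:ℝ)^n) ^ (-2:ℝ) * Real.pi)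
              = 2 ^ s * Real.pi * (((2:ℝ)^n)^s * ((2:ℝ)^n)^(-2:ℝ)) := by ring
            _ = Real.pi * 2 ^ s * ((2:ℝ)^n) ^ (s-2) := by rw [e4]; ring
  have hr : ENNReal.ofReal ((2:ℝ) ^ (s - 2)) < 1 := by
    rw [← ENNReal.ofReal_one]
    exact ENNReal.ofReal_lt_ofReal_iff_of_nonneg (by positivity) |>.2
      (Real.rpow_lt_one_of_one_lt_of_neg one_lt_two (by linarith))
  calc ∫⁻ w in ball (0:ℂ) 1, g w ∂volume
      ≤ ∫⁻ w in {0} ∪ ⋃ n, S n, g w ∂volume := lintegral_mono_set hcov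
    _ ≤ ∫⁻ w in ({0}:Set ℂ), g w ∂volume + ∫⁻ w in ⋃ n, S n, g w ∂volume :=
        lintegral_union_le _ _ _
    _ = ∫⁻ w in ⋃ n, S n, g w ∂volume := by
        rw [setLIntegral_measure_zero _ _ (measure_singleton 0), zero_add]
    _ ≤ ∑' n, ∫⁻ w in S n, g w ∂volume := lintegral_iUnion_le _ _
    _ ≤ ∑' n, ENNReal.ofReal (Real.pi * 2 ^ s) * (ENNReal.ofReal ((2:ℝ) ^ (s - 2))) ^ n :=
        ENNReal.tsum_le_tsum key
    _ = ENNReal.ofReal (Real.pi * 2 ^ s) * ∑' n, (ENNReal.ofReal ((2:ℝ) ^ (s - 2))) ^ n :=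
        ENNReal.tsum_mul_left
    _ < ⊤ := by
        rw [ENNReal.tsum_geometric]
        exact ENNReal.mul_lt_top ENNReal.ofReal_lt_top
          (ENNReal.inv_lt_top.2 (tsub_pos_of_lt hr))
lemma aux_root_bound {s : ℝ} (hs0 : 0 ≤ s) (K : Set ℂ) (α : ℂ) :
    ∫⁻ z in K, ((‖(z - α)⁻¹‖₊ : ℝ≥0∞)) ^ s ∂volume
      ≤ volume K + ∫⁻ w in ball (0:ℂ) 1, ((‖w‖₊ : ℝ≥0∞))⁻¹ ^ s ∂volume := by
  set g : ℂ → ℝ≥0∞ := fun w => ((‖w‖₊ : ℝ≥0∞))⁻¹ ^ s with hg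
  have hmg : Measurable fun z : ℂ => g (z - α) :=
    ((((measurable_id.sub measurable_const).nnnorm).coe_nnreal_ennreal).inv).pow
      measurable_const
  have pt1 : ∀ z : ℂ, ((‖(z - α)⁻¹‖₊ : ℝ≥0∞)) ^ s ≤ g (z - α) := by
    intro z
    refine ENNReal.rpow_le_rpow ?_ hs0
    rw [nnnorm_inv]
    exact ENNReal.coe_inv_le
  have pt2 : ∀ z : ℂ, g (z - α) ≤ 1 + (ball α 1).indicator (fun z => g (z - α)) z := by
    intro z
    by_cases hz : z ∈ ball α 1
    · rw [Set.indicator_of_mem hz]; exact le_add_self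
    · rw [Set.indicator_of_notMem hz, add_zero]
      have h1 : (1:ℝ) ≤ ‖z - α‖ := by
        have := not_lt.1 fun h => hz (by simpa [mem_ball, dist_eq_norm] using h)
        simpa [mem_ball, dist_eq_norm] using this
      have hc : (1:ℝ≥0∞) ≤ (‖z - α‖₊ : ℝ≥0∞) := by
        rw [← enorm_eq_nnnorm, ← ofReal_norm]
        exact ENNReal.one_le_ofReal.2 h1
      exact ENNReal.rpow_le_one (ENNReal.inv_le_one.2 hc) hs0
  have htrans : ∫⁻ z in ball α 1, g (z - α) ∂volume
      = ∫⁻ w in ball (0:ℂ) 1, g w ∂volume := by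
    rw [← lintegral_indicator measurableSet_ball, ← lintegral_indicator measurableSet_ball]
    rw [← lintegral_add_right_eq_self
      (fun z : ℂ => (ball α 1).indicator (fun z => g (z - α)) z) α]
    refine lintegral_congr fun x => ?_
    have hmem : x + α ∈ ball α 1 ↔ x ∈ ball (0:ℂ) 1 := by
      simp [mem_ball, dist_eq_norm]
    by_cases hx : x ∈ ball (0:ℂ) 1
    · rw [Set.indicator_of_mem (hmem.2 hx), Set.indicator_of_mem hx, add_sub_cancel_right]
    · rw [Set.indicator_of_notMem (fun h => hx (hmem.1 h)), Set.indicator_of_notMem hx]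
  calc ∫⁻ z in K, ((‖(z - α)⁻¹‖₊ : ℝ≥0∞)) ^ s ∂volume
      ≤ ∫⁻ z in K, (1 + (ball α 1).indicator (fun z => g (z - α)) z) ∂volume := by
        refine setLIntegral_mono (measurable_const.add (hmg.indicator measurableSet_ball))
          fun z _ => le_trans (pt1 z) (pt2 z)
    _ = volume K + ∫⁻ z in K, (ball α 1).indicator (fun z => g (z - α)) z ∂volume := by
        rw [lintegral_add_left measurable_const, setLIntegral_one]
    _ ≤ volume K + ∫⁻ z, (ball α 1).indicator (fun z => g (z - α)) z ∂volume := by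
        gcongr
        exact Measure.restrict_le_self
    _ = volume K + ∫⁻ w in ball (0:ℂ) 1, g w ∂volume := by
        rw [lintegral_indicator measurableSet_ball, htrans]
/-- For `1 ≤ s < 2` and a compact `K ⊂ ℂ` there is a constant `C = C(s, K) > 0` such that for
every nonzero complex polynomial `q`,
`(∫_K |q'(z)/q(z)|^s dA(z))^(1/s) ≤ C · deg q`, where `dA = (1/π) dx dy` is the normalized
area measure on `ℂ`. (At the finitely many zeros of `q`, a `dA`-null set, the integrand takes
the junk value `0` coming from division by zero.) -/
theorem logDeriv_Lp_bound (s : ℝ) (hs1 : 1 ≤ s) (hs2 : s < 2)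
    (K : Set ℂ) (hK : IsCompact K) :
    ∃ C : ℝ, 0 < C ∧ ∀ q : Polynomial ℂ, q ≠ 0 →
      (∫⁻ z in K, ((‖(derivative q).eval z / q.eval z‖₊ : ℝ≥0∞)) ^ s
          ∂((ENNReal.ofReal Real.pi)⁻¹ • volume)) ^ (1 / s)
        ≤ ENNReal.ofReal C * (q.natDegree : ℝ≥0∞) := by
  have hs0 : (0:ℝ) < s := lt_of_lt_of_le one_pos hs1
  set p : ℝ≥0∞ := ENNReal.ofReal s with hpdef
  have hp0 : p ≠ 0 := by
    rw [hpdef, Ne, ENNReal.ofReal_eq_zero]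
    linarith
  have hptop : p ≠ ∞ := ENNReal.ofReal_ne_top
  have hp1 : 1 ≤ p := by
    rw [hpdef, ← ENNReal.ofReal_one]
    exact ENNReal.ofReal_le_ofReal hs1
  have hpt : p.toReal = s := ENNReal.toReal_ofReal hs0.le
  set μ : Measure ℂ := (ENNReal.ofReal Real.pi)⁻¹ • volume with hμ
  set I := ∫⁻ w in ball (0:ℂ) 1, ((‖w‖₊ : ℝ≥0∞))⁻¹ ^ s ∂volume with hIdef
  have hIlt : I < ⊤ := aux_I_lt_top hs0.le hs2
  set B : ℝ≥0∞ := (volume K + I) ^ (1/s) with hBdef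
  have hBtop : B ≠ ∞ := by
    refine ENNReal.rpow_ne_top_of_nonneg (by positivity) ?_
    exact (ENNReal.add_lt_top.2 ⟨hK.measure_lt_top, hIlt⟩).ne
  have hμle : ∀ f : ℂ → ℝ≥0∞, ∫⁻ z in K, f z ∂μ ≤ ∫⁻ z in K, f z ∂volume := by
    intro f
    rw [hμ, Measure.restrict_smul, lintegral_smul_measure]
    calc (ENNReal.ofReal Real.pi)⁻¹ * ∫⁻ z in K, f z ∂volume
        ≤ 1 * ∫⁻ z in K, f z ∂volume := by
          gcongr
          exact ENNReal.inv_le_one.2 (ENNReal.one_le_ofReal.2 (by linarith [Real.pi_gt_three]))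
      _ = _ := one_mul _
  have hroot : ∀ α : ℂ, eLpNorm (fun z : ℂ => (z - α)⁻¹) p (μ.restrict K) ≤ B := by
    intro α
    rw [eLpNorm_eq_lintegral_rpow_enorm_toReal hp0 hptop, hpt]
    exact ENNReal.rpow_le_rpow (le_trans (hμle _) (aux_root_bound hs0.le K α)) (by positivity)
  refine ⟨B.toReal + 1, by positivity, ?_⟩
  intro q hq
  have hLHS : (∫⁻ z in K, ((‖(derivative q).eval z / q.eval z‖₊ : ℝ≥0∞)) ^ s ∂μ) ^ (1/s)
      = eLpNorm (fun z : ℂ => (derivative q).eval z / q.eval z) p (μ.restrict K) := by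
    rw [eLpNorm_eq_lintegral_rpow_enorm_toReal hp0 hptop, hpt]
    rfl
  rw [hLHS]
  have hcard : q.roots.card = q.natDegree :=
    Polynomial.splits_iff_card_roots.mp (IsAlgClosed.splits q)
  have hlc : q.leadingCoeff ≠ 0 := leadingCoeff_ne_zero.2 hq
  have hfac := Polynomial.C_leadingCoeff_mul_prod_multiset_X_sub_C hcard
  have hnull : (μ.restrict K) {z : ℂ | q.eval z = 0} = 0 := by
    have h0 : volume {z : ℂ | q.eval z = 0} = 0 :=
      (Polynomial.finite_setOf_isRoot hq).measure_zero _
    have h1 : μ {z : ℂ | q.eval z = 0} = 0 := by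
      rw [hμ, Measure.smul_apply, h0, smul_zero]
    exact le_antisymm (le_trans (Measure.le_iff'.1 Measure.restrict_le_self _) h1.le)
      (zero_le')
  have hae : (fun z : ℂ => (derivative q).eval z / q.eval z)
      =ᵐ[μ.restrict K] fun z => (q.roots.map fun α => (z - α)⁻¹).sum := by
    have hane : ∀ᵐ z ∂(μ.restrict K), q.eval z ≠ 0 := by
      rw [ae_iff]
      simpa using hnull
    filter_upwards [hane] with z hz
    have hz' : ∀ β ∈ q.roots, z ≠ β := by
      intro β hβ heq
      exact hz (heq ▸ Polynomial.isRoot_of_mem_roots hβ)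
    calc (derivative q).eval z / q.eval z
        = (derivative (C q.leadingCoeff * (q.roots.map fun a => X - C a).prod)).eval z
          / (C q.leadingCoeff * (q.roots.map fun a => X - C a).prod).eval z := by
          rw [hfac]
      _ = (q.leadingCoeff * (derivative (q.roots.map fun a => X - C a).prod).eval z)
          / (q.leadingCoeff * ((q.roots.map fun a => X - C a).prod).eval z) := by
          rw [derivative_C_mul, eval_mul, eval_mul, eval_C]
      _ = (derivative (q.roots.map fun a => X - C a).prod).eval z
          / ((q.roots.map fun a => X - C a).prod).eval z :=
          mul_div_mul_left _ _ hlc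
      _ = _ := aux_logDeriv_sum q.roots z hz'
  rw [eLpNorm_congr_ae hae]
  calc eLpNorm (fun z : ℂ => (q.roots.map fun α => (z - α)⁻¹).sum) p (μ.restrict K)
      ≤ q.roots.card * B := aux_eLpNorm_msum_le hp1 _ B hroot q.roots
    _ ≤ (q.natDegree : ℝ≥0∞) * ENNReal.ofReal (B.toReal + 1) := by
        gcongr
        · exact_mod_cast hcard.le
        · calc B = ENNReal.ofReal B.toReal := (ENNReal.ofReal_toReal hBtop).symm
            _ ≤ _ := ENNReal.ofReal_le_ofReal (by linarith)
    _ = ENNReal.ofReal (B.toReal + 1) * q.natDegree := mul_comm _ _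
end
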